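/- In the graphic matroid M(K4) on 6 elements, the locked subsets are exactly the four triangles of K4; each has cardinality 3 and rank 2, and hence M(K4) has exactly 4 locked subsets. -/

import Mathlib

open Set Matroid

variable {α : Type*}

/-- The (ℕ-valued) rank of a set in a matroid: the largest cardinality of an
independent subset. -/
noncomputable def Matroid.rnk (M : Matroid α) (X : Set α) : ℕ :=
  sSup (Set.ncard '' {I | M.Indep I ∧ I ⊆ X})

/-- `C` is a circuit of `M`: a minimal dependent set. -/
def Matroid.IsCircuitSet (M : Matroid α) (C : Set α) : Prop :=
  C ⊆ M.E ∧ ¬ M.Indep C ∧ ∀ x ∈ C, M.Indep (C \ {x})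

/-- A matroid is 2-connected (connected in Oxley's sense) if it is nonempty and
every two distinct elements of the ground set lie on a common circuit. -/
def Matroid.TwoConnected (M : Matroid α) : Prop :=
  M.E.Nonempty ∧ ∀ e ∈ M.E, ∀ f ∈ M.E, e ≠ f →
    ∃ C, M.IsCircuitSet C ∧ e ∈ C ∧ f ∈ C

/-- `L` is locked in `M` if `M|L` and `M✶|(E\L)` are 2-connected and both
`r(L)` and `r✶(E\L)` are at least `2`. -/
def Matroid.Locked (M : Matroid α) (L : Set α) : Prop :=
  L ⊂ M.E ∧ (M ↾ L).TwoConnected ∧ (M✶ ↾ (M.E \ L)).TwoConnected ∧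
    2 ≤ M.rnk L ∧ 2 ≤ M✶.rnk (M.E \ L)

/-- The edge set of the complete graph `K₄` on vertices `Fin 4`. -/
abbrev K4Edge := {p : Fin 4 × Fin 4 // p.1 < p.2}

/-- An edge is incident to a vertex. -/
def K4incident (v : Fin 4) (e : K4Edge) : Prop := e.1.1 = v ∨ e.1.2 = v

/-- The triangle of `K₄` avoiding the vertex `v`. -/
def K4triangle (v : Fin 4) : Set K4Edge := {e | ¬ K4incident v e}

/-- A perfect matching of `K₄`: two vertex-disjoint edges. -/
def K4IsMatching (m : Set K4Edge) : Prop :=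
  m.ncard = 2 ∧ ∀ e ∈ m, ∀ f ∈ m, e ≠ f → ∀ v, ¬ (K4incident v e ∧ K4incident v f)

/-- Edge sets of cycles of `K₄`: the triangles and the 4-cycles
(complements of perfect matchings). -/
def K4IsCycle (C : Set K4Edge) : Prop :=
  (∃ v, C = K4triangle v) ∨ (∃ m, K4IsMatching m ∧ C = Set.univ \ m)

/-! ### Auxiliary computable development -/

instance K4incident.dec (v : Fin 4) (e : K4Edge) : Decidable (K4incident v e) := by
  unfold K4incident; infer_instance

/-- Finset version of the triangle avoiding `v`. -/
def triF (v : Fin 4) : Finset K4Edge := Finset.univ.filter (fun e => ¬ K4incident v e)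

lemma coe_triF (v : Fin 4) : (↑(triF v) : Set K4Edge) = K4triangle v := by
  ext e; simp [triF, K4triangle]

def E01 : K4Edge := ⟨(0, 1), by decide⟩
def E02 : K4Edge := ⟨(0, 2), by decide⟩
def E03 : K4Edge := ⟨(0, 3), by decide⟩
def E12 : K4Edge := ⟨(1, 2), by decide⟩
def E13 : K4Edge := ⟨(1, 3), by decide⟩
def E23 : K4Edge := ⟨(2, 3), by decide⟩

/-- The list of circuits of `M(K₄)`: four triangles and three `4`-cycles. -/
def circuitL : List (Finset K4Edge) :=
  [triF 0, triF 1, triF 2, triF 3,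
   {E02, E03, E12, E13}, {E01, E03, E12, E23}, {E01, E02, E13, E23}]

/-- The list of cocircuits of `M(K₄)`: four vertex stars and three `4`-cycles. -/
def cocircL : List (Finset K4Edge) :=
  [{E01, E02, E03}, {E01, E12, E13}, {E02, E12, E23}, {E03, E13, E23},
   {E02, E03, E12, E13}, {E01, E03, E12, E23}, {E01, E02, E13, E23}]

/-- The list of bases of `M(K₄)`: the sixteen spanning trees. -/
def baseL : List (Finset K4Edge) :=
  [{E01, E02, E03}, {E01, E02, E13}, {E01, E02, E23}, {E01, E03, E12},
   {E01, E03, E23}, {E01, E12, E13}, {E01, E12, E23}, {E01, E13, E23},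
   {E02, E03, E12}, {E02, E03, E13}, {E02, E12, E13}, {E02, E12, E23},
   {E02, E13, E23}, {E03, E12, E13}, {E03, E12, E23}, {E03, E13, E23}]

/-- Finset version of `K4IsMatching`. -/
def matchF (s : Finset K4Edge) : Prop :=
  s.card = 2 ∧ ∀ e ∈ s, ∀ f ∈ s, e ≠ f → ∀ v, ¬ (K4incident v e ∧ K4incident v f)

instance : DecidablePred matchF := fun s => by unfold matchF; infer_instance

/-- Finset version of `K4IsCycle`. -/
def cycF (s : Finset K4Edge) : Prop :=
  (∃ v, s = triF v) ∨ (∃ m : Finset K4Edge, matchF m ∧ s = Finset.univ \ m)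

instance : DecidablePred cycF := fun s => by unfold cycF; infer_instance

/-- Finset version of independence in `M(K₄)`. -/
def indF (s : Finset K4Edge) : Prop := ∀ c ∈ circuitL, ¬ c ⊆ s

instance : DecidablePred indF := fun s => by unfold indF; infer_instance

/-- Finset version of independence in the dual of `M(K₄)`. -/
def dualIndF (s : Finset K4Edge) : Prop := ∃ b ∈ baseL, Disjoint s b

instance : DecidablePred dualIndF := fun s => by unfold dualIndF; infer_instance

/-- Finset version of two-connectivity of the restriction to `l`, with
circuits taken from the list `cl`. -/
def twoConnF (cl : List (Finset K4Edge)) (l : Finset K4Edge) : Prop :=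
  l.Nonempty ∧ ∀ e ∈ l, ∀ f ∈ l, e ≠ f → ∃ c ∈ cl, c ⊆ l ∧ e ∈ c ∧ f ∈ c

instance (cl : List (Finset K4Edge)) : DecidablePred (twoConnF cl) := fun l => by
  unfold twoConnF; infer_instance

/-- Finset version of the rank function, relative to an independence predicate. -/
def rnkF (P : Finset K4Edge → Prop) [DecidablePred P] (s : Finset K4Edge) : ℕ :=
  ((s.powerset.filter P).sup Finset.card)

/-- Finset version of `Matroid.Locked` for `M(K₄)`. -/
def lockedF (l : Finset K4Edge) : Prop :=
  l ≠ Finset.univ ∧ twoConnF circuitL l ∧ twoConnF cocircL (Finset.univ \ l) ∧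
    2 ≤ rnkF indF l ∧ 2 ≤ rnkF dualIndF (Finset.univ \ l)

instance : DecidablePred lockedF := fun l => by unfold lockedF; infer_instance

/-! ### Decidable facts -/

set_option maxRecDepth 100000

lemma cycF_mem : ∀ s : Finset K4Edge, cycF s ↔ s ∈ circuitL := by decide

lemma baseF_mem : ∀ b : Finset K4Edge,
    (indF b ∧ ∀ e, e ∉ b → ¬ indF (insert e b)) ↔ b ∈ baseL := by decide

lemma cocircF_mem : ∀ c : Finset K4Edge,
    (¬ dualIndF c ∧ ∀ x ∈ c, dualIndF (c.erase x)) ↔ c ∈ cocircL := by decide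

lemma lockedF_iff : ∀ l : Finset K4Edge, lockedF l ↔ ∃ v, l = triF v := by decide

lemma triF_inj : ∀ v w : Fin 4, triF v = triF w → v = w := by decide

lemma triF_card : ∀ v : Fin 4, (triF v).card = 3 := by decide

lemma rnkF_triF : ∀ v : Fin 4, rnkF indF (triF v) = 2 := by decide

/-! ### Bridging lemmas -/

lemma matching_coe (s : Finset K4Edge) : K4IsMatching ↑s ↔ matchF s := by
  simp [K4IsMatching, matchF, Set.ncard_coe_finset]

lemma cycle_coe (s : Finset K4Edge) : K4IsCycle ↑s ↔ cycF s := by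
  unfold K4IsCycle cycF
  apply or_congr
  · constructor
    · rintro ⟨v, hv⟩
      exact ⟨v, Finset.coe_injective (by rw [hv, coe_triF])⟩
    · rintro ⟨v, rfl⟩; exact ⟨v, coe_triF v⟩
  · constructor
    · rintro ⟨m, hm, hsm⟩
      have hf : ↑m.toFinite.toFinset = m := m.toFinite.coe_toFinset
      refine ⟨m.toFinite.toFinset, (matching_coe _).1 (by rwa [hf]), ?_⟩
      apply Finset.coe_injective
      rw [Finset.coe_sdiff, Finset.coe_univ, hf]; exact hsm
    · rintro ⟨m, hm, rfl⟩
      exact ⟨↑m, (matching_coe m).2 hm, by rw [Finset.coe_sdiff, Finset.coe_univ]⟩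

variable {M : Matroid K4Edge}

lemma circ_class (hcirc : ∀ C, M.IsCircuitSet C ↔ K4IsCycle C) (C : Set K4Edge) :
    M.IsCircuitSet C ↔ ∃ c ∈ circuitL, C = ↑c := by
  rw [hcirc]
  constructor
  · intro h
    have hf : ↑C.toFinite.toFinset = C := C.toFinite.coe_toFinset
    refine ⟨C.toFinite.toFinset, ?_, hf.symm⟩
    rw [← cycF_mem, ← cycle_coe, hf]; exact h
  · rintro ⟨c, hc, rfl⟩
    rw [cycle_coe, cycF_mem]; exact hc

lemma exists_circ (hE : M.E = Set.univ) :
    ∀ n (I : Set K4Edge), I.ncard ≤ n → ¬ M.Indep I → ∃ C, C ⊆ I ∧ M.IsCircuitSet C := by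
  intro n
  induction n with
  | zero =>
    intro I h0 hI
    rw [Nat.le_zero, Set.ncard_eq_zero I.toFinite] at h0
    exact absurd (h0 ▸ M.empty_indep) hI
  | succ n ih =>
    intro I hn hI
    by_cases h : ∀ x ∈ I, M.Indep (I \ {x})
    · exact ⟨I, Subset.rfl, by rw [hE]; exact Set.subset_univ I, hI, h⟩
    · push_neg at h
      obtain ⟨x, hx, hdep⟩ := h
      have hlt : (I \ {x}).ncard < I.ncard := Set.ncard_diff_singleton_lt_of_mem hx I.toFinite
      obtain ⟨C, hCI, hC⟩ := ih (I \ {x}) (by omega) hdep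
      exact ⟨C, hCI.trans diff_subset, hC⟩

lemma indep_iff (hE : M.E = Set.univ) (hcirc : ∀ C, M.IsCircuitSet C ↔ K4IsCycle C)
    (I : Set K4Edge) : M.Indep I ↔ ∀ c ∈ circuitL, ¬ (↑c : Set K4Edge) ⊆ I := by
  constructor
  · intro h c hc hsub
    have hC : M.IsCircuitSet ↑c := (circ_class hcirc _).2 ⟨c, hc, rfl⟩
    exact hC.2.1 (h.subset hsub)
  · intro h
    by_contra hI
    obtain ⟨C, hCI, hC⟩ := exists_circ hE I.ncard I le_rfl hI
    obtain ⟨c, hc, rfl⟩ := (circ_class hcirc C).1 hC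
    exact h c hc hCI

lemma indep_coe (hE : M.E = Set.univ) (hcirc : ∀ C, M.IsCircuitSet C ↔ K4IsCycle C)
    (s : Finset K4Edge) : M.Indep ↑s ↔ indF s := by
  rw [indep_iff hE hcirc]
  unfold indF
  exact forall₂_congr fun c _ => by rw [Finset.coe_subset]

lemma base_class (hE : M.E = Set.univ) (hcirc : ∀ C, M.IsCircuitSet C ↔ K4IsCycle C)
    (B : Set K4Edge) : M.IsBase B ↔ ∃ b ∈ baseL, B = ↑b := by
  rw [isBase_iff_maximal_indep]
  constructor
  · rintro ⟨hi, hmax⟩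
    have hf : ↑B.toFinite.toFinset = B := B.toFinite.coe_toFinset
    refine ⟨B.toFinite.toFinset, ?_, hf.symm⟩
    rw [← baseF_mem]
    refine ⟨(indep_coe hE hcirc _).1 (by rwa [hf]), ?_⟩
    intro e he hins
    have hind : M.Indep (insert e B) := by
      rw [← hf, ← Finset.coe_insert, indep_coe hE hcirc]; exact hins
    have hsub : insert e B ⊆ B := hmax hind (Set.subset_insert e B)
    exact he ((Set.Finite.mem_toFinset _).2 (hsub (Set.mem_insert e B)))
  · rintro ⟨b, hb, rfl⟩
    have h2 := (baseF_mem b).2 hb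
    refine ⟨(indep_coe hE hcirc b).2 h2.1, ?_⟩
    intro J hJ hBJ
    change (↑b : Set K4Edge) ⊆ J at hBJ
    change J ⊆ (↑b : Set K4Edge)
    by_contra hJB
    rw [Set.not_subset] at hJB
    obtain ⟨e, heJ, heB⟩ := hJB
    have hind : M.Indep (insert e ↑b) := hJ.subset (Set.insert_subset heJ hBJ)
    rw [← Finset.coe_insert, indep_coe hE hcirc] at hind
    exact h2.2 e (by simpa using heB) hind

lemma dual_indep_coe (hE : M.E = Set.univ) (hcirc : ∀ C, M.IsCircuitSet C ↔ K4IsCycle C)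
    (s : Finset K4Edge) : M✶.Indep ↑s ↔ dualIndF s := by
  rw [dual_indep_iff_exists']
  constructor
  · rintro ⟨-, B, hB, hd⟩
    obtain ⟨b, hb, rfl⟩ := (base_class hE hcirc B).1 hB
    exact ⟨b, hb, by exact_mod_cast hd⟩
  · rintro ⟨b, hb, hd⟩
    exact ⟨by rw [hE]; exact Set.subset_univ _, ↑b, (base_class hE hcirc _).2 ⟨b, hb, rfl⟩,
      by exact_mod_cast hd⟩

lemma cocirc_class (hE : M.E = Set.univ) (hcirc : ∀ C, M.IsCircuitSet C ↔ K4IsCycle C)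
    (C : Set K4Edge) : M✶.IsCircuitSet C ↔ ∃ c ∈ cocircL, C = ↑c := by
  constructor
  · rintro ⟨-, hdep, hmin⟩
    have hf : ↑C.toFinite.toFinset = C := C.toFinite.coe_toFinset
    refine ⟨C.toFinite.toFinset, (cocircF_mem _).1 ⟨?_, ?_⟩, hf.symm⟩
    · intro h
      exact hdep (by rw [← hf]; exact (dual_indep_coe hE hcirc _).2 h)
    · intro x hx
      have := hmin x ((Set.Finite.mem_toFinset _).1 hx)
      rw [← hf, ← Finset.coe_erase, dual_indep_coe hE hcirc] at this
      exact this
  · rintro ⟨c, hc, rfl⟩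
    have h := (cocircF_mem c).2 hc
    refine ⟨by rw [Matroid.dual_ground, hE]; exact Set.subset_univ _, ?_, ?_⟩
    · intro hind
      exact h.1 ((dual_indep_coe hE hcirc c).1 hind)
    · intro x hx
      have := (dual_indep_coe hE hcirc (c.erase x)).2 (h.2 x (by exact_mod_cast hx))
      rwa [Finset.coe_erase] at this

lemma restr_circ (N : Matroid K4Edge) (hNE : N.E = Set.univ) (S C : Set K4Edge) :
    (N ↾ S).IsCircuitSet C ↔ C ⊆ S ∧ N.IsCircuitSet C := by
  unfold Matroid.IsCircuitSet
  rw [Matroid.restrict_ground_eq]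
  simp only [Matroid.restrict_indep_iff]
  constructor
  · rintro ⟨h1, h2, h3⟩
    exact ⟨h1, ⟨by rw [hNE]; exact Set.subset_univ _, fun hi => h2 ⟨hi, h1⟩,
      fun x hx => (h3 x hx).1⟩⟩
  · rintro ⟨h1, -, h2, h3⟩
    exact ⟨h1, fun h => h2 h.1, fun x hx => ⟨h3 x hx, diff_subset.trans h1⟩⟩

lemma twoConn_coe (N : Matroid K4Edge) (hNE : N.E = Set.univ) (cl : List (Finset K4Edge))
    (hcl : ∀ C, N.IsCircuitSet C ↔ ∃ c ∈ cl, C = ↑c) (l : Finset K4Edge) :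
    (N ↾ (↑l : Set K4Edge)).TwoConnected ↔ twoConnF cl l := by
  unfold Matroid.TwoConnected twoConnF
  rw [Matroid.restrict_ground_eq]
  apply and_congr
  · exact Finset.coe_nonempty
  constructor
  · intro h e he f hf hef
    obtain ⟨C, hC, heC, hfC⟩ := h e (by simpa using he) f (by simpa using hf) hef
    rw [restr_circ N hNE] at hC
    obtain ⟨hCl, hCc⟩ := hC
    obtain ⟨c, hc, rfl⟩ := (hcl _).1 hCc
    exact ⟨c, hc, by exact_mod_cast hCl, by exact_mod_cast heC, by exact_mod_cast hfC⟩
  · intro h e he f hf hef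
    obtain ⟨c, hc, hcl', hec, hfc⟩ := h e (by simp at he ⊢; exact he) f (by simp at hf ⊢; exact hf) hef
    exact ⟨↑c, (restr_circ N hNE _ _).2 ⟨by exact_mod_cast hcl', (hcl _).2 ⟨c, hc, rfl⟩⟩,
      by simpa using hec, by simpa using hfc⟩

lemma rnk_coe (N : Matroid K4Edge) (P : Finset K4Edge → Prop) [DecidablePred P]
    (hP : ∀ t : Finset K4Edge, N.Indep ↑t ↔ P t) (s : Finset K4Edge) :
    N.rnk ↑s = rnkF P s := by
  have hg : IsGreatest (Set.ncard '' {I | N.Indep I ∧ I ⊆ (↑s : Set K4Edge)}) (rnkF P s) := by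
    constructor
    · have hne : (s.powerset.filter P).Nonempty :=
        ⟨∅, by
          rw [Finset.mem_filter, Finset.mem_powerset]
          exact ⟨Finset.empty_subset s, (hP ∅).1 (by rw [Finset.coe_empty]; exact N.empty_indep)⟩⟩
      obtain ⟨t, ht, hts⟩ := Finset.exists_mem_eq_sup _ hne Finset.card
      rw [Finset.mem_filter, Finset.mem_powerset] at ht
      exact ⟨↑t, ⟨(hP t).2 ht.2, by exact_mod_cast ht.1⟩,
        by rw [Set.ncard_coe_finset]; exact hts.symm⟩
    · rintro n ⟨I, ⟨hInd, hIs⟩, rfl⟩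
      have hf : ↑I.toFinite.toFinset = I := I.toFinite.coe_toFinset
      have hmem : I.toFinite.toFinset ∈ s.powerset.filter P := by
        rw [Finset.mem_filter, Finset.mem_powerset]
        constructor
        · rw [← Finset.coe_subset, hf]; exact_mod_cast hIs
        · exact (hP _).1 (by rwa [hf])
      calc I.ncard = I.toFinite.toFinset.card := by rw [← Set.ncard_coe_finset, hf]
        _ ≤ rnkF P s := Finset.le_sup hmem
  exact hg.csSup_eq

lemma locked_coe (hE : M.E = Set.univ) (hcirc : ∀ C, M.IsCircuitSet C ↔ K4IsCycle C)
    (l : Finset K4Edge) : M.Locked ↑l ↔ lockedF l := by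
  have hdiff : M.E \ ↑l = ↑(Finset.univ \ l) := by
    rw [hE, Finset.coe_sdiff, Finset.coe_univ]
  unfold Matroid.Locked lockedF
  apply and_congr
  · rw [hE, Set.ssubset_univ_iff, ← Finset.coe_univ, ne_eq, Finset.coe_inj, ne_eq]
  apply and_congr
  · exact twoConn_coe M hE circuitL (circ_class hcirc) l
  apply and_congr
  · rw [hdiff]
    exact twoConn_coe M✶ (by rw [Matroid.dual_ground, hE]) cocircL (cocirc_class hE hcirc) _
  apply and_congr
  · rw [rnk_coe M indF (indep_coe hE hcirc) l]
  · rw [hdiff, rnk_coe M✶ dualIndF (dual_indep_coe hE hcirc) _]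

/-- In the cycle matroid `M(K₄)` (the matroid on the 6 edges of `K₄` whose
circuits are the edge sets of cycles), the locked subsets are exactly the four
triangles; each has cardinality 3 and rank 2, and there are exactly 4 locked
subsets. -/
theorem k4_locked (M : Matroid K4Edge) (hE : M.E = Set.univ)
    (hcirc : ∀ C, M.IsCircuitSet C ↔ K4IsCycle C) :
    {L | M.Locked L} = {C | ∃ v, C = K4triangle v} ∧
      (∀ v, (K4triangle v).ncard = 3 ∧ M.rnk (K4triangle v) = 2) ∧
      {L | M.Locked L}.ncard = 4 := by
  have key : ∀ L : Set K4Edge, M.Locked L ↔ ∃ v, L = K4triangle v := by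
    intro L
    have hf : ↑L.toFinite.toFinset = L := L.toFinite.coe_toFinset
    rw [← hf, locked_coe hE hcirc, lockedF_iff]
    constructor
    · rintro ⟨v, hv⟩; exact ⟨v, by rw [hv, coe_triF]⟩
    · rintro ⟨v, hv⟩
      exact ⟨v, Finset.coe_injective (by rw [hv, coe_triF])⟩
  have hseteq : {L | M.Locked L} = {C | ∃ v, C = K4triangle v} := Set.ext fun L => key L
  refine ⟨hseteq, fun v => ⟨?_, ?_⟩, ?_⟩
  · rw [← coe_triF, Set.ncard_coe_finset, triF_card]
  · rw [← coe_triF, rnk_coe M indF (indep_coe hE hcirc), rnkF_triF]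
  · have hrange : {L | M.Locked L} = Set.range K4triangle := by
      rw [hseteq]; ext C; simp [Set.mem_range, eq_comm]
    have hinj : Function.Injective K4triangle := by
      intro v w h
      exact triF_inj v w (Finset.coe_injective (by rw [coe_triF, coe_triF, h]))
    rw [hrange, ← Set.image_univ, Set.ncard_image_of_injective _ hinj, Set.ncard_univ]
    simp [Nat.card_eq_fintype_card]
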